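/- Let L₀ be a language over Σ, let L be a language of $-free words, let δ be a test-free PDL formula, and let ψ be a satisfiable test-free PDL formula. Define L₁ := {w ∈ L₀ | w is $-free} and L₂ := {u ++ [$] | u is $-free and u ++ [$] is a prefix of some word in L₀}. If EF^{L·{$}} ⊤ is equivalent to δ ∨ EF^{L₀} ψ, then δ ∨ EF^{L₀} ψ is equivalent to δ ∨ EF^{L₁} ψ ∨ EF^{L₂} ⊤. -/

import Mathlib

namespace PDL

/-- Test-free PDL formulas (without atomic propositions) over the alphabet `α`:
`⊥`, `⊤`, disjunction, conjunction, and `EF^L`/`AG^L` for languages `L ⊆ α*`. -/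
inductive Formula (α : Type) : Type where
  | bot : Formula α
  | top : Formula α
  | or  : Formula α → Formula α → Formula α
  | and : Formula α → Formula α → Formula α
  | EF  : Set (List α) → Formula α → Formula α
  | AG  : Set (List α) → Formula α → Formula α

/-- `Path tr s w t` : there is a finite path from `s` to `t` along the
transition relation `tr` whose labels read the word `w`. -/
inductive Path {σ α : Type} (tr : σ → α → σ → Prop) : σ → List α → σ → Prop where
  | nil (s : σ) : Path tr s [] s
  | cons {s t u : σ} {a : α} {w : List α} :
      tr s a t → Path tr t w u → Path tr s (a :: w) u

/-- Satisfaction of a formula at a state of a labeled transition system. -/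
def Sat {σ α : Type} (tr : σ → α → σ → Prop) (s : σ) : Formula α → Prop
  | .bot => False
  | .top => True
  | .or φ ψ => Sat tr s φ ∨ Sat tr s ψ
  | .and φ ψ => Sat tr s φ ∧ Sat tr s ψ
  | .EF L φ => ∃ w t, Path tr s w t ∧ w ∈ L ∧ Sat tr t φ
  | .AG L φ => ∀ w t, Path tr s w t → w ∈ L → Sat tr t φ

/-- A structure: a pointed labeled transition system. -/
structure Struct (α : Type) : Type 1 where
  S : Type
  tr : S → α → S → Prop
  root : S

/-- A structure satisfies a formula iff its root does. -/
def SatS {α : Type} (M : Struct α) (φ : Formula α) : Prop := Sat M.tr M.root φ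

/-- Two formulas are equivalent iff exactly the same structures satisfy them. -/
def FEquiv {α : Type} (φ ψ : Formula α) : Prop := ∀ M : Struct α, SatS M φ ↔ SatS M ψ

/-- A formula is a tautology iff every structure satisfies it. -/
def Tautology {α : Type} (φ : Formula α) : Prop := ∀ M : Struct α, SatS M φ

/-- `φ` semantically implies `ψ`. -/
def SemImplies {α : Type} (φ ψ : Formula α) : Prop := ∀ M : Struct α, SatS M φ → SatS M ψ

/-- A formula is ε-free iff the empty word lies in no language annotating an
`EF`/`AG` operator occurring in it. -/
def EpsFree {α : Type} : Formula α → Prop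
  | .bot => True
  | .top => True
  | .or φ ψ => EpsFree φ ∧ EpsFree ψ
  | .and φ ψ => EpsFree φ ∧ EpsFree ψ
  | .EF L φ => [] ∉ L ∧ EpsFree φ
  | .AG L φ => [] ∉ L ∧ EpsFree φ

/-- Finite disjunction of a list of formulas. -/
def bigOr {α : Type} : List (Formula α) → Formula α
  | [] => .bot
  | φ :: l => .or φ (bigOr l)

/-- Finite conjunction of a list of formulas. -/
def bigAnd {α : Type} : List (Formula α) → Formula α
  | [] => .top
  | φ :: l => .and φ (bigAnd l)

/-- `M'` extends `M`: the states of `M` embed into those of `M'`, preserving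
the root and the transitions. -/
def Extends {α : Type} (M M' : Struct α) : Prop :=
  ∃ i : M.S → M'.S, Function.Injective i ∧ i M.root = M'.root ∧
    ∀ s a t, M.tr s a t → M'.tr (i s) a (i t)

/-- The linear structure `π_w` for a word `w`: states `0, …, |w|`, root `0`,
and a transition `i →^c i+1` where `c` is the `(i+1)`-st letter of `w`. -/
def pathStruct {α : Type} (w : List α) : Struct α where
  S := Fin (w.length + 1)
  tr := fun i a j => ∃ h : (i : ℕ) < w.length, w.get ⟨i, h⟩ = a ∧ (j : ℕ) = (i : ℕ) + 1
  root := ⟨0, Nat.succ_pos _⟩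

/-- `Lang φ` (relative to the designated letter `dollar`): the set of
`$`-free words `w` such that `π_{w ++ [$]}` satisfies `φ`. -/
def Lang {α : Type} (dollar : α) (φ : Formula α) : Set (List α) :=
  {w | dollar ∉ w ∧ SatS (pathStruct (w ++ [dollar])) φ}

theorem path_append_of {σ α : Type} {tr : σ → α → σ → Prop} {s m : σ} {w₁ : List α}
    (h1 : Path tr s w₁ m) : ∀ {w₂ : List α} {u : σ}, Path tr m w₂ u → Path tr s (w₁ ++ w₂) u := by
  induction h1 with
  | nil => intro _ _ h; exact h
  | cons hstep _ ih => intro _ _ h2; exact .cons hstep (ih h2)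

theorem path_split {σ α : Type} {tr : σ → α → σ → Prop} {s u : σ} {w₁ w₂ : List α}
    (h : Path tr s (w₁ ++ w₂) u) : ∃ m, Path tr s w₁ m ∧ Path tr m w₂ u := by
  induction w₁ generalizing s with
  | nil => exact ⟨s, .nil s, h⟩
  | cons a w ih =>
    cases h with
    | cons hstep hp =>
      obtain ⟨m, h1, h2⟩ := ih hp
      exact ⟨m, .cons hstep h1, h2⟩

theorem path_single {σ α : Type} {tr : σ → α → σ → Prop} {s t : σ} {a : α} :
    Path tr s [a] t ↔ tr s a t := by
  constructor
  · intro h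
    cases h with
    | cons hstep hp => cases hp; exact hstep
  · intro h; exact .cons h (.nil t)

theorem mem_first {α : Type} {a : α} {w : List α} (hw : a ∈ w) :
    ∃ u v, w = u ++ a :: v ∧ a ∉ u := by
  induction w with
  | nil => cases hw
  | cons b w ih =>
    by_cases hb : a = b
    · exact ⟨[], w, by simp [hb], by simp⟩
    · have hw' : a ∈ w := by
        rcases List.mem_cons.mp hw with h | h
        · exact absurd h hb
        · exact h
      obtain ⟨u, v, rfl, hu⟩ := ih hw'
      exact ⟨b :: u, v, rfl, by simp [hu, hb]⟩

theorem path_map {σ σ' α : Type} {tr : σ → α → σ → Prop} {tr' : σ' → α → σ' → Prop}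
    (f : σ → σ') (hf : ∀ s a x, tr' (f s) a x ↔ ∃ t, tr s a t ∧ x = f t)
    {s : σ} {w : List α} {x : σ'} :
    Path tr' (f s) w x ↔ ∃ t, Path tr s w t ∧ x = f t := by
  constructor
  · intro h
    induction w generalizing s with
    | nil => cases h; exact ⟨s, .nil s, rfl⟩
    | cons a w ih =>
      cases h with
      | cons hstep hp =>
        obtain ⟨t, ht, rfl⟩ := (hf _ _ _).mp hstep
        obtain ⟨q, hq, rfl⟩ := ih hp
        exact ⟨q, .cons ht hq, rfl⟩
  · rintro ⟨t, hp, rfl⟩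
    induction hp with
    | nil => exact .nil _
    | cons hstep _ ih => exact .cons ((hf _ _ _).mpr ⟨_, hstep, rfl⟩) ih

theorem sat_map {σ σ' α : Type} {tr : σ → α → σ → Prop} {tr' : σ' → α → σ' → Prop}
    (f : σ → σ') (hf : ∀ s a x, tr' (f s) a x ↔ ∃ t, tr s a t ∧ x = f t) :
    ∀ (φ : Formula α) (s : σ), Sat tr s φ ↔ Sat tr' (f s) φ := by
  intro φ
  induction φ with
  | bot => intro s; simp [Sat]
  | top => intro s; simp [Sat]
  | or φ ψ ihφ ihψ => intro s; simp only [Sat]; rw [ihφ s, ihψ s]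
  | and φ ψ ihφ ihψ => intro s; simp only [Sat]; rw [ihφ s, ihψ s]
  | EF L φ ih =>
    intro s
    simp only [Sat]
    constructor
    · rintro ⟨w, t, hp, hw, hs⟩
      exact ⟨w, f t, (path_map f hf).mpr ⟨t, hp, rfl⟩, hw, (ih t).mp hs⟩
    · rintro ⟨w, x, hp, hw, hs⟩
      obtain ⟨t, hp', rfl⟩ := (path_map f hf).mp hp
      exact ⟨w, t, hp', hw, (ih t).mpr hs⟩
  | AG L φ ih =>
    intro s
    simp only [Sat]
    constructor
    · intro H w x hp hw
      obtain ⟨t, hp', rfl⟩ := (path_map f hf).mp hp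
      exact (ih t).mp (H w t hp' hw)
    · intro H w t hp hw
      exact (ih t).mpr (H w (f t) ((path_map f hf).mpr ⟨t, hp, rfl⟩) hw)

section Construction

variable {α : Type} (M N : Struct α) (dollar : α) (s : M.S) (v : List α)

/-- States of the surgery structure. -/
abbrev CT : Type := M.S ⊕ (ℕ ⊕ N.S)

/-- Target of the chain at position `i`. -/
def ctgt (i : ℕ) : CT M N :=
  if i < v.length then Sum.inr (Sum.inl i) else Sum.inr (Sum.inr N.root)

/-- Transitions of the surgery structure. -/
def ctr : CT M N → α → CT M N → Prop := fun x a y =>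
  (∃ p q, x = Sum.inl p ∧ y = Sum.inl q ∧ M.tr p a q) ∨
  (x = Sum.inl s ∧ a = dollar ∧ y = ctgt M N v 0) ∨
  (∃ i, ∃ h : i < v.length, x = Sum.inr (Sum.inl i) ∧ a = v.get ⟨i, h⟩ ∧ y = ctgt M N v (i+1)) ∨
  (∃ n m, x = Sum.inr (Sum.inr n) ∧ y = Sum.inr (Sum.inr m) ∧ N.tr n a m)

theorem ctr_inr (n : N.S) (a : α) (x : CT M N) :
    ctr M N dollar s v (Sum.inr (Sum.inr n)) a x ↔
      ∃ m, N.tr n a m ∧ x = Sum.inr (Sum.inr m) := by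
  constructor
  · rintro (⟨p, q, hx, _⟩ | ⟨hx, _⟩ | ⟨i, hi, hx, _⟩ | ⟨n', m, hx, hy, htr⟩)
    · exact absurd hx (by simp)
    · exact absurd hx (by simp)
    · exact absurd hx (by simp)
    · obtain rfl : n' = n := by simpa using hx.symm
      exact ⟨m, htr, hy⟩
  · rintro ⟨m, htr, rfl⟩
    exact Or.inr (Or.inr (Or.inr ⟨n, m, rfl, rfl, htr⟩))

theorem ctr_lift {r q : M.S} {w : List α} (hp : Path M.tr r w q) :
    Path (ctr M N dollar s v) (Sum.inl r) w (Sum.inl q) := by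
  induction hp with
  | nil => exact .nil _
  | cons hstep _ ih => exact .cons (Or.inl ⟨_, _, rfl, rfl, hstep⟩) ih

theorem ctr_chain (i : ℕ) :
    Path (ctr M N dollar s v) (ctgt M N v i) (v.drop i) (Sum.inr (Sum.inr N.root)) := by
  by_cases h : i < v.length
  · rw [ctgt, if_pos h, List.drop_eq_getElem_cons h]
    refine .cons (Or.inr (Or.inr (Or.inl ⟨i, h, rfl, by simp, rfl⟩))) (ctr_chain (i+1))
  · rw [ctgt, if_neg h, List.drop_eq_nil_of_le (le_of_not_gt h)]
    exact .nil _
termination_by v.length - i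
decreasing_by omega

theorem ctr_proj {r : M.S} {w : List α} (hw : dollar ∉ w) {x : CT M N}
    (h : Path (ctr M N dollar s v) (Sum.inl r) w x) :
    ∃ q : M.S, Path M.tr r w q ∧ x = Sum.inl q := by
  induction w generalizing r with
  | nil => cases h; exact ⟨r, .nil r, rfl⟩
  | cons a w ih =>
    cases h with
    | cons hstep hp =>
      rcases hstep with ⟨p, q, hx, hy, htr⟩ | ⟨hx, ha, hy⟩ | ⟨i, hi, hx, _⟩ | ⟨n, m, hx, _⟩
      · subst hy
        obtain rfl : p = r := by simpa using hx.symm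
        obtain ⟨q', hq', rfl⟩ := ih (fun hm => hw (List.mem_cons_of_mem a hm)) hp
        exact ⟨q', .cons htr hq', rfl⟩
      · exact absurd (ha ▸ (List.mem_cons_self (a := a) (l := w))) hw
      · exact absurd hx (by simp)
      · exact absurd hx (by simp)

theorem ctr_dollar_step {t : M.S} (hst : M.tr s dollar t) {m : M.S} {x : CT M N}
    (h : ctr M N dollar s v (Sum.inl m) dollar x) : ∃ q, M.tr m dollar q := by
  rcases h with ⟨p, q, hx, _, htr⟩ | ⟨hx, _, _⟩ | ⟨i, hi, hx, _⟩ | ⟨n, m', hx, _⟩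
  · obtain rfl : p = m := by simpa using hx.symm
    exact ⟨q, htr⟩
  · obtain rfl : s = m := by simpa using hx.symm
    exact ⟨t, hst⟩
  · exact absurd hx (by simp)
  · exact absurd hx (by simp)

end Construction

/-- If `EF^{L·{$}} ⊤ ≡ δ ∨ EF^{L₀} ψ` with `L` a language of `$`-free words
and `ψ` satisfiable, then `δ ∨ EF^{L₀} ψ ≡ δ ∨ EF^{L₁} ψ ∨ EF^{L₂} ⊤`, where
`L₁` is the set of `$`-free words of `L₀` and `L₂` is the set of words
`u ++ [$]` with `u` `$`-free that are prefixes of words in `L₀`. -/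
theorem stmt_13 {α : Type} (dollar : α) (L₀ L : Set (List α))
    (hL : ∀ w ∈ L, dollar ∉ w)
    (δ ψ : Formula α) (hψ : ∃ M : Struct α, SatS M ψ)
    (h : FEquiv (.EF {x | ∃ w ∈ L, x = w ++ [dollar]} .top) (.or δ (.EF L₀ ψ))) :
    FEquiv (.or δ (.EF L₀ ψ))
      (.or δ (.or (.EF {w ∈ L₀ | dollar ∉ w} ψ)
        (.EF {x | ∃ u, dollar ∉ u ∧ x = u ++ [dollar] ∧ ∃ y ∈ L₀, x <+: y} .top))) := by
  intro M
  constructor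
  · rintro (hδ | ⟨w, t, hp, hw, hψt⟩)
    · exact Or.inl hδ
    · by_cases hd : dollar ∈ w
      · obtain ⟨u, v, rfl, hu⟩ := mem_first hd
        have he : u ++ dollar :: v = (u ++ [dollar]) ++ v := by simp
        obtain ⟨m, hp1, _⟩ := path_split (he ▸ hp)
        refine Or.inr (Or.inr ⟨u ++ [dollar], m, hp1, ⟨u, hu, rfl, ⟨_, hw, ⟨v, he.symm⟩⟩⟩, trivial⟩)
      · exact Or.inr (Or.inl ⟨w, t, hp, ⟨hw, hd⟩, hψt⟩)
  · rintro (hδ | (⟨w, t, hp, ⟨hw, hwd⟩, hψt⟩ | ⟨x, t, hp, ⟨u, hu, rfl, y, hy, v, hyv⟩, -⟩))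
    · exact Or.inl hδ
    · exact Or.inr ⟨w, t, hp, hw, hψt⟩
    · -- hard case
      obtain ⟨N, hN⟩ := hψ
      obtain ⟨s, hps, hst1⟩ := path_split hp
      have hst : M.tr s dollar t := path_single.mp hst1
      set M'' : Struct α := ⟨CT M N, ctr M N dollar s v, Sum.inl M.root⟩ with hM''
      have hsatψ : Sat M''.tr (Sum.inr (Sum.inr N.root)) ψ :=
        (sat_map (fun n => Sum.inr (Sum.inr n)) (ctr_inr M N dollar s v) ψ N.root).mp hN
      have hpath : Path M''.tr M''.root y (Sum.inr (Sum.inr N.root)) := by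
        have h1 : Path M''.tr (Sum.inl M.root) u (Sum.inl s) := ctr_lift M N dollar s v hps
        have h2 : Path M''.tr (Sum.inl s) (dollar :: v) (Sum.inr (Sum.inr N.root)) := by
          refine .cons (Or.inr (Or.inl ⟨rfl, rfl, rfl⟩)) ?_
          simpa using ctr_chain M N dollar s v 0
        have := path_append_of h1 h2
        rwa [show u ++ dollar :: v = y by simpa using hyv] at this
      have hEF : SatS M'' (.or δ (.EF L₀ ψ)) := Or.inr ⟨y, _, hpath, hy, hsatψ⟩
      obtain ⟨x', t', hpath', ⟨w', hw'L, rfl⟩, -⟩ := (h M'').mpr hEF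
      have hw'd : dollar ∉ w' := hL w' hw'L
      obtain ⟨mid, hp1, hp2⟩ := path_split hpath'
      obtain ⟨q, hpq, rfl⟩ := ctr_proj M N dollar s v hw'd hp1
      obtain ⟨q2, hq2⟩ := ctr_dollar_step M N dollar s v hst (path_single.mp hp2)
      exact (h M).mp ⟨w' ++ [dollar], q2, path_append_of hpq (path_single.mpr hq2),
        ⟨w', hw'L, rfl⟩, trivial⟩

end PDL
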